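/- For all n ≥ 1, (−1)^{n−1}·p_n(x) = (1+x)^{n−1}·R_n(1/(1+x)); equivalently, (−1)^{n−1}·p_n(x−1) equals the reversed Ramanujan polynomial x^{n−1}·R_n(1/x). -/

import Mathlib

open Polynomial Finset

/-- The Ramanujan polynomials: `R_1(y) = 1`, `R_{n+1}(y) = n(1+y)R_n(y) + y²R_n'(y)`. -/
noncomputable def R : ℕ → Polynomial ℤ
  | 0 => 0
  | 1 => 1
  | n+2 => C ((n : ℤ) + 1) * (1 + X) * R (n+1) + X ^ 2 * derivative (R (n+1))

/-- The Kalugin–Jeffrey polynomials: `p_1(x) = 1`,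
`p_{n+1}(x) = −(nx + 3n − 1)p_n(x) + (1+x)p_n'(x)`. -/
noncomputable def p : ℕ → Polynomial ℤ
  | 0 => 0
  | 1 => 1
  | n+2 => -(C ((n : ℤ) + 1) * X + C (3 * ((n : ℤ) + 1) - 1)) * p (n+1) +
      (1 + X) * derivative (p (n+1))

lemma R_natDegree : ∀ n : ℕ, (R (n+1)).natDegree ≤ n
  | 0 => by simp [R]
  | (m+1) => by
    have ih := R_natDegree m
    have hX : ((1:Polynomial ℤ) + X).natDegree ≤ 1 := (natDegree_add_le _ _).trans (by simp)
    have h1 : (C ((m : ℤ) + 1) * (1 + X) * R (m+1)).natDegree ≤ m + 1 := by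
      calc (C ((m : ℤ) + 1) * (1 + X) * R (m+1)).natDegree
          ≤ (C ((m : ℤ) + 1) * (1 + X)).natDegree + (R (m+1)).natDegree := natDegree_mul_le
        _ ≤ 1 + m := add_le_add (natDegree_mul_le.trans (by
              simp only [natDegree_C, Nat.zero_add]; exact hX)) ih
        _ = m + 1 := by omega
    have h2 : (X ^ 2 * derivative (R (m+1))).natDegree ≤ m + 1 := by
      rcases Nat.eq_zero_or_pos m with rfl | hm
      · have hd : derivative (R 1) = 0 := by
          show derivative (1 : Polynomial ℤ) = 0; simp
        simp [hd]
      · calc (X ^ 2 * derivative (R (m+1))).natDegree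
            ≤ (X ^ 2 : Polynomial ℤ).natDegree + (derivative (R (m+1))).natDegree :=
              natDegree_mul_le
          _ ≤ 2 + ((R (m+1)).natDegree - 1) := by
              have := natDegree_derivative_le (R (m+1)); simp [natDegree_X_pow]
          _ ≤ m + 1 := by omega
    show (C ((m : ℤ) + 1) * (1 + X) * R (m+1) + X ^ 2 * derivative (R (m+1))).natDegree ≤ m + 1
    exact (natDegree_add_le _ _).trans (max_le h1 h2)

lemma R_coeff_top (n : ℕ) : (R (n+1)).coeff (n+1) = 0 :=
  coeff_eq_zero_of_natDegree_lt (lt_of_le_of_lt (R_natDegree n) (by omega))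

lemma term' (e k : ℕ) (a : ℤ) (m : ℤ) (hm : m = (k : ℤ) + (e : ℤ)) :
    (C (m + 1) * X + C (3 * (m + 1) - 1)) * (C a * (1 + X) ^ e)
      - (1 + X) * (C a * (C ((e : ℕ) : ℤ) * (1 + X) ^ (e - 1) * 1))
    = C ((m + 1) * a) * (1 + X) ^ (e + 1)
      + C ((m + 1) * a) * (1 + X) ^ e + C ((k : ℤ) * a) * (1 + X) ^ e := by
  subst hm
  cases e with
  | zero => push_cast; simp only [pow_zero, pow_one, Nat.zero_sub, map_add, map_mul, map_sub,
      map_one, map_ofNat, C_0]; ring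
  | succ e' =>
    have h1 : e' + 1 - 1 = e' := rfl
    rw [h1]
    push_cast
    simp only [map_add, map_mul, map_sub, map_one, map_ofNat, map_natCast]
    ring

lemma key' (n : ℕ) (r : Polynomial ℤ) (htop : r.coeff (n+1) = 0) :
    (C ((n:ℤ) + 1) * X + C (3 * ((n:ℤ) + 1) - 1)) *
        (∑ k ∈ range (n+1), C (r.coeff k) * (1 + X) ^ (n - k)) -
      (1 + X) * derivative (∑ k ∈ range (n+1), C (r.coeff k) * (1 + X) ^ (n - k)) =
    ∑ k ∈ range (n+2),
      C ((C ((n : ℤ) + 1) * (1 + X) * r + X ^ 2 * derivative r).coeff k) * (1 + X) ^ (n + 1 - k) := by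
  have hE : (C ((n:ℤ) + 1) * X + C (3 * ((n:ℤ) + 1) - 1)) *
        (∑ k ∈ range (n+1), C (r.coeff k) * (1 + X) ^ (n - k)) -
      (1 + X) * derivative (∑ k ∈ range (n+1), C (r.coeff k) * (1 + X) ^ (n - k)) =
      (∑ k ∈ range (n+1), C (((n:ℤ)+1) * r.coeff k) * (1+X)^(n+1-k))
      + (∑ k ∈ range (n+1), C (((n:ℤ)+1) * r.coeff k) * (1+X)^(n-k))
      + (∑ k ∈ range (n+1), C ((k : ℤ) * r.coeff k) * (1+X)^(n-k)) := by
    rw [derivative_sum]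
    simp only [derivative_mul, derivative_C, zero_mul, zero_add, derivative_pow,
      derivative_add, derivative_one, derivative_X]
    rw [Finset.mul_sum, Finset.mul_sum, ← Finset.sum_sub_distrib,
      ← Finset.sum_add_distrib, ← Finset.sum_add_distrib]
    refine Finset.sum_congr rfl fun k hk => ?_
    have hkn : k ≤ n := by simpa [Nat.lt_succ_iff] using hk
    have h1 : n + 1 - k = (n - k) + 1 := by omega
    rw [h1]
    exact term' (n - k) k (r.coeff k) ((n:ℤ)) (by rw [Nat.cast_sub hkn]; ring)
  rw [hE]
  -- now RHS
  have hR2 : ∀ k, (C ((n : ℤ) + 1) * (1 + X) * r + X ^ 2 * derivative r).coeff k =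
      ((n:ℤ)+1) * r.coeff k + ((n:ℤ)+1) * (X * r).coeff k
      + (X^2 * derivative r).coeff k := by
    intro k
    have h1 : ((1 + X) * r).coeff k = r.coeff k + (X * r).coeff k := by
      rw [add_mul, one_mul, coeff_add]
    rw [coeff_add, mul_assoc, coeff_C_mul, h1]
    ring
  have hRHS : ∑ k ∈ range (n+2),
      C ((C ((n : ℤ) + 1) * (1 + X) * r + X ^ 2 * derivative r).coeff k) * (1 + X) ^ (n + 1 - k) =
      (∑ k ∈ range (n+2), C (((n:ℤ)+1) * r.coeff k) * (1+X)^(n+1-k))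
      + (∑ k ∈ range (n+2), C (((n:ℤ)+1) * (X * r).coeff k) * (1+X)^(n+1-k))
      + (∑ k ∈ range (n+2), C ((X^2 * derivative r).coeff k) * (1+X)^(n+1-k)) := by
    rw [← Finset.sum_add_distrib, ← Finset.sum_add_distrib]
    refine Finset.sum_congr rfl fun k _ => ?_
    rw [hR2 k, C_add, C_add]; ring
  rw [hRHS]
  have e1 : ∑ k ∈ range (n+2), C (((n:ℤ)+1) * r.coeff k) * (1+X)^(n+1-k)
      = ∑ k ∈ range (n+1), C (((n:ℤ)+1) * r.coeff k) * (1+X)^(n+1-k) := by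
    rw [Finset.sum_range_succ]
    simp [htop]
  have e2 : ∑ k ∈ range (n+2), C (((n:ℤ)+1) * (X * r).coeff k) * (1+X)^(n+1-k)
      = ∑ k ∈ range (n+1), C (((n:ℤ)+1) * r.coeff k) * (1+X)^(n-k) := by
    have h0 : (X * r).coeff 0 = 0 := by simp [mul_coeff_zero]
    rw [show n + 2 = n + 1 + 1 from rfl, Finset.sum_range_succ']
    simp only [h0, mul_zero, map_zero, zero_mul, add_zero, coeff_X_mul,
      Nat.add_sub_add_right]
  have e3 : ∑ k ∈ range (n+2), C ((X^2 * derivative r).coeff k) * (1+X)^(n+1-k)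
      = ∑ k ∈ range (n+1), C ((k : ℤ) * r.coeff k) * (1+X)^(n-k) := by
    have h0 : (X^2 * derivative r).coeff 0 = 0 := by
      simp [pow_two, mul_assoc, mul_coeff_zero]
    have h1 : (X^2 * derivative r).coeff (0+1) = 0 := by
      rw [pow_two, mul_assoc, coeff_X_mul]
      simp [mul_coeff_zero]
    rw [show n + 2 = n + 1 + 1 from rfl, Finset.sum_range_succ', Finset.sum_range_succ',
      Finset.sum_range_succ']
    rw [h0, h1]
    simp only [map_zero, zero_mul, add_zero, Nat.cast_zero]
    refine Finset.sum_congr rfl fun k _ => ?_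
    have he : n + 1 - (k + 1 + 1) = n - (k + 1) := by omega
    have hc : (X^2 * derivative r).coeff (k + 1 + 1) = r.coeff (k+1) * ((k:ℤ)+1) := by
      rw [show k + 1 + 1 = k + 2 from rfl, coeff_X_pow_mul, coeff_derivative]
    rw [he, hc]
    push_cast
    ring_nf
  rw [e1, e2, e3]

lemma key (n : ℕ) :
    (C ((n:ℤ) + 1) * X + C (3 * ((n:ℤ) + 1) - 1)) *
        (∑ k ∈ range (n+1), C ((R (n+1)).coeff k) * (1 + X) ^ (n - k)) -
      (1 + X) * derivative (∑ k ∈ range (n+1), C ((R (n+1)).coeff k) * (1 + X) ^ (n - k)) =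
    ∑ k ∈ range (n+2), C ((R (n+2)).coeff k) * (1 + X) ^ (n + 1 - k) := by
  have h : R (n+2) = C ((n : ℤ) + 1) * (1 + X) * R (n+1) + X ^ 2 * derivative (R (n+1)) := rfl
  rw [h]
  exact key' n (R (n+1)) (R_coeff_top n)


/-- For `n ≥ 1`, `(−1)^{n−1} p_n(x) = (1+x)^{n−1} R_n(1/(1+x))`, expressed as the
polynomial identity `(−1)^{n−1} p_n = ∑_{k=0}^{n-1} [y^k]R_n · (1+x)^{n−1−k}`. -/
theorem p_eq_reversed_ramanujan (n : ℕ) (hn : 1 ≤ n) :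
    ((-1 : ℤ) ^ (n - 1)) • p n =
      ∑ k ∈ Finset.range n, C ((R n).coeff k) * (1 + X) ^ (n - 1 - k) := by
  induction n, hn using Nat.le_induction with
  | base => simp [p, R]
  | succ m hm ih =>
    obtain ⟨m', rfl⟩ := Nat.exists_eq_add_of_le hm
    have hm1 : 1 + m' = m' + 1 := by ring
    rw [hm1] at ih ⊢
    have hp : p (m' + 2) = -(C ((m' : ℤ) + 1) * X + C (3 * ((m' : ℤ) + 1) - 1)) * p (m'+1) +
      (1 + X) * derivative (p (m'+1)) := rfl
    have hpq : p (m' + 1) = ((-1:ℤ) ^ m') •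
        (∑ k ∈ Finset.range (m'+1), C ((R (m'+1)).coeff k) * (1 + X) ^ (m' + 1 - 1 - k)) := by
      rw [← ih, smul_smul, ← pow_add]
      simp [Nat.add_sub_cancel, Even.neg_one_pow (Even.add_self m')]
    simp only [Nat.add_sub_cancel] at hpq ⊢
    rw [hp, hpq, ← key m']
    simp only [smul_eq_C_mul, derivative_mul, derivative_C, zero_mul, zero_add]
    set c : Polynomial ℤ := C ((-1:ℤ)^m') with hcdef
    have hc : c * c = 1 := by
      rw [hcdef, ← C_mul, ← pow_add]
      simp [Even.neg_one_pow (Even.add_self m')]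
    have hC : (C ((-1:ℤ)^(m'+1)) : Polynomial ℤ) = -c := by
      rw [pow_succ, C_mul, hcdef]; simp
    rw [hC]
    set A : Polynomial ℤ := C ((m':ℤ) + 1) * X + C (3 * ((m':ℤ) + 1) - 1)
    set S : Polynomial ℤ := ∑ k ∈ Finset.range (m'+1), C ((R (m'+1)).coeff k) * (1 + X) ^ (m' - k)
    set D : Polynomial ℤ := derivative S
    linear_combination (A * S - (1 + X) * D) * hc
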